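/- arXiv:1809.00896 — 3 statements merged into one kernel-verified Lean document; each statement's English description precedes it below -/
import Mathlib

section
/- Let α be a type, let f : ℕ → α be a sequence of states (the state of a shared object at each time step), and let c : ℕ → ℕ be a monotone counter such that whenever the state changes, the counter strictly increases: for every n, if f n ≠ f (n+1) then c n < c (n+1). Then for all m ≤ n with c m = c n, the state is constant on the interval [m, n]: f t = f m for every t with m ≤ t ≤ n. (In particular, two successive collections observing equal states together with equal counter values certify that the state did not change at any intermediate instant.) -/
theorem state_constant_of_counter_eq {α : Type*} (f : ℕ → α) (c : ℕ → ℕ)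
    (hmono : Monotone c)
    (hinc : ∀ n, f n ≠ f (n + 1) → c n < c (n + 1)) :
    ∀ m n, m ≤ n → c m = c n → ∀ t, m ≤ t → t ≤ n → f t = f m := by
  intro m n hmn hc t hmt htn
  induction t with
  | zero => have : m = 0 := Nat.le_zero.mp hmt; rw [this]
  | succ k ih =>
    rcases Nat.eq_or_lt_of_le hmt with h | h
    · rw [← h]
    · have hmk : m ≤ k := Nat.lt_succ_iff.mp h
      have hkn : k ≤ n := Nat.le_of_succ_le htn
      have hfk : f k = f m := ih hmk hkn
      have : f k = f (k + 1) := by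
        by_contra hne
        have h1 := hinc k hne
        have h2 := hmono hmk
        have h3 := hmono htn
        omega
      rw [← this, hfk]
end

section
/- Let V be a type, let E : ℕ → V → V → Prop be a time-varying edge relation (E n is the graph's edge relation at time step n), and let c : ℕ → V → ℕ be per-vertex counters satisfying: (i) for every vertex u, the function n ↦ c n u is monotone in n; and (ii) for every n and u, if the out-edges of u change from time n to time n+1 (i.e., there exists v with ¬(E n u v ↔ E (n+1) u v)) then c n u < c (n+1) u. Fix a source s : V and times m ≤ n, and suppose c m u = c n u for every vertex u reachable from s at time m (Relation.ReflTransGen (E m) s u). Then the reachable set from s is constant throughout [m, n]: for every t with m ≤ t ≤ n and every w : V, Relation.ReflTransGen (E t) s w ↔ Relation.ReflTransGen (E m) s w. In particular, if no path from s to a given vertex exists at time m, then no path exists at any instant in [m, n]. -/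
theorem reachable_set_constant_of_counters_eq {V : Type*}
    (E : ℕ → V → V → Prop) (c : ℕ → V → ℕ)
    (hmono : ∀ u, Monotone (fun n => c n u))
    (hinc : ∀ n u, (∃ v, ¬(E n u v ↔ E (n + 1) u v)) → c n u < c (n + 1) u)
    (s : V) (m n : ℕ) (hmn : m ≤ n)
    (hc : ∀ u, Relation.ReflTransGen (E m) s u → c m u = c n u) :
    ∀ t, m ≤ t → t ≤ n → ∀ w : V,
      (Relation.ReflTransGen (E t) s w ↔ Relation.ReflTransGen (E m) s w) := by
  -- counters constant on [m,n] for reachable vertices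
  have hcc : ∀ u, Relation.ReflTransGen (E m) s u → ∀ t, m ≤ t → t ≤ n →
      c t u = c m u := by
    intro u hu t hmt htn
    have h1 := hmono u hmt
    have h2 := hmono u htn
    have := hc u hu
    simp only at h1 h2
    omega
  -- edges out of reachable vertices unchanged
  have hedge : ∀ u, Relation.ReflTransGen (E m) s u → ∀ t, m ≤ t → t ≤ n →
      ∀ v, E t u v ↔ E m u v := by
    intro u hu t hmt
    induction t with
    | zero => intro _ v; have : m = 0 := Nat.le_zero.mp hmt; subst this; rfl
    | succ k ih =>
      intro hkn v
      rcases Nat.lt_or_ge m (k+1) with h | h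
      · have hmk : m ≤ k := Nat.lt_succ_iff.mp h
        have hkn' : k ≤ n := Nat.le_of_succ_le hkn
        have hsame : E k u v ↔ E (k+1) u v := by
          by_contra hne
          have := hinc k u ⟨v, hne⟩
          have e1 := hcc u hu k hmk hkn'
          have e2 := hcc u hu (k+1) (Nat.le_of_lt h) hkn
          omega
        exact hsame.symm.trans (ih hmk hkn' v)
      · have : m = k + 1 := le_antisymm hmt h
        subst this; rfl
  intro t hmt htn w
  constructor
  · intro h
    induction h with
    | refl => exact .refl
    | tail _ he ih =>
      exact ih.tail ((hedge _ ih t hmt htn _).mp he)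
  · intro h
    induction h with
    | refl => exact .refl
    | tail _ he ih =>
      rename_i b c' hb
      exact ih.tail ((hedge _ hb t hmt htn _).mpr he)
end

section
/- Let V be a type, let E : ℕ → V → V → Prop be a time-varying edge relation, and let c : ℕ → V → ℕ be per-vertex counters satisfying: (i) for every vertex u, the function n ↦ c n u is monotone in n; and (ii) for every n and u, if the out-edges of u change from time n to time n+1 (i.e., there exists v with ¬(E n u v ↔ E (n+1) u v)) then c n u < c (n+1) u. Fix times m ≤ n and a sequence of vertices v₀, v₁, …, v_k such that for every i < k the edge (vᵢ, vᵢ₊₁) is present at time m (E m vᵢ vᵢ₊₁) and the counter of each non-terminal vertex is unchanged between the two times: c m vᵢ = c n vᵢ for all i < k. Then the path is present at every intermediate instant: for every t with m ≤ t ≤ n and every i < k, E t vᵢ vᵢ₊₁ holds. -/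
theorem path_present_throughout_of_counters_eq {V : Type*}
    (E : ℕ → V → V → Prop) (c : ℕ → V → ℕ)
    (hmono : ∀ u, Monotone (fun n => c n u))
    (hinc : ∀ n u, (∃ v, ¬(E n u v ↔ E (n + 1) u v)) → c n u < c (n + 1) u)
    (m n : ℕ) (hmn : m ≤ n) (k : ℕ) (v : ℕ → V)
    (hpath : ∀ i < k, E m (v i) (v (i + 1)))
    (hc : ∀ i < k, c m (v i) = c n (v i)) :
    ∀ t, m ≤ t → t ≤ n → ∀ i < k, E t (v i) (v (i + 1)) := by
  have key : ∀ u, c m u = c n u → ∀ t, m ≤ t → t ≤ n → ∀ w, E t u w ↔ E m u w := by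
    intro u hcu t hmt
    induction t, hmt using Nat.le_induction with
    | base => intro _ w; rfl
    | succ t hmt ih =>
      intro htn w
      have htn' : t ≤ n := Nat.le_of_succ_le htn
      have hnochange : ∀ w, E t u w ↔ E (t + 1) u w := by
        by_contra h
        have hlt := hinc t u (not_forall.mp h)
        have h1 : c m u ≤ c t u := hmono u hmt
        have h2 : c (t + 1) u ≤ c n u := hmono u htn
        omega
      rw [← hnochange w]
      exact ih htn' w
  intro t hmt htn i hik
  exact (key (v i) (hc i hik) t hmt htn (v (i + 1))).mpr (hpath i hik)
end
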